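/- Let V : ℝ → ℝ be an odd continuous function. Then for all integers k, l and α ∈ {0,1}, (1/4π²) ∫_{−π}^{π} ∫_{−π}^{π} [V(2cos x) − V(2cos y)]/[2cos x − 2cos y] · cos((k−l)(x−y) + (α(1∓1)+1)y) dx dy = 0, where the integrand is interpreted as the divided difference (so it is continuous). -/

import Mathlib

open Real intervalIntegral

lemma dense_cos_ne (y : ℝ) : Dense {t : ℝ | Real.cos t ≠ Real.cos y} := by
  have hc : Set.Countable {t : ℝ | Real.cos t = Real.cos y} := by
    apply Set.Countable.mono (s₂ := (⋃ k : ℤ, {2 * (k:ℝ) * Real.pi + y, 2 * (k:ℝ) * Real.pi - y}))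
    · intro t ht
      rw [Set.mem_setOf_eq, Real.cos_eq_cos_iff] at ht
      obtain ⟨k, hk | hk⟩ := ht
      · exact Set.mem_iUnion.2 ⟨-k, by left; push_cast; linarith⟩
      · exact Set.mem_iUnion.2 ⟨k, by right; push_cast [Set.mem_singleton_iff]; linarith⟩
    · exact Set.countable_iUnion fun k => (Set.countable_singleton _).insert _
  have := hc.dense_compl ℝ
  convert this using 1
  rfl

/-- For an odd continuous `V`, the double integral of the divided difference of
`V(2cos·)` against `cos((k−l)(x−y) + (α(1∓1)+1)y)` vanishes. Here `D` is the
continuous extension of the divided difference. -/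
theorem odd_divided_difference_integral_vanishes
    (V : ℝ → ℝ) (hV : Continuous V) (hodd : ∀ s, V (-s) = -V s)
    (D : ℝ → ℝ → ℝ) (hD : Continuous fun p : ℝ × ℝ => D p.1 p.2)
    (hDval : ∀ x y : ℝ, 2 * Real.cos x ≠ 2 * Real.cos y →
      D x y = (V (2 * Real.cos x) - V (2 * Real.cos y)) / (2 * Real.cos x - 2 * Real.cos y))
    (k l : ℤ) (α : ℕ) (hα : α = 0 ∨ α = 1) (σ : ℝ) (hσ : σ = 0 ∨ σ = 2) :
    (1 / (4 * Real.pi ^ 2)) *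
      ∫ x in (-Real.pi)..Real.pi, ∫ y in (-Real.pi)..Real.pi,
        D x y * Real.cos (((k : ℝ) - l) * (x - y) + ((α : ℝ) * σ + 1) * y) = 0 := by
  -- the exponent coefficient
  set m : ℝ := (α : ℝ) * σ + 1 with hm'
  have hm : m = 1 ∨ m = 3 := by
    rcases hα with rfl | rfl <;> rcases hσ with rfl | rfl <;> norm_num [hm']
  have hcosneg : ∀ θ : ℝ, Real.cos (θ + m * π) = -Real.cos θ := by
    intro θ
    rcases hm with h | h <;> rw [h]
    · rw [one_mul, Real.cos_add_pi]
    · rw [show θ + 3 * π = (θ + π) + 2 * π by ring, Real.cos_add_two_pi, Real.cos_add_pi]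
  -- shift symmetry of D
  have hshift : ∀ x y : ℝ, D (x + π) (y + π) = D x y := by
    intro x y
    have hc1 : Continuous fun t : ℝ => D (t + π) (y + π) :=
      hD.comp ((continuous_id.add continuous_const).prodMk continuous_const)
    have hc2 : Continuous fun t : ℝ => D t y :=
      hD.comp (continuous_id.prodMk continuous_const)
    have heq : (fun t : ℝ => D (t + π) (y + π)) = fun t : ℝ => D t y := by
      refine Continuous.ext_on (dense_cos_ne y) hc1 hc2 ?_
      intro t ht
      have ht' : Real.cos t ≠ Real.cos y := ht
      have e1 : (2:ℝ) * Real.cos (t + π) = -(2 * Real.cos t) := by rw [Real.cos_add_pi]; ring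
      have e2 : (2:ℝ) * Real.cos (y + π) = -(2 * Real.cos y) := by rw [Real.cos_add_pi]; ring
      have hne : 2 * Real.cos t ≠ 2 * Real.cos y := fun h => ht' (by linarith)
      have hne' : 2 * Real.cos (t + π) ≠ 2 * Real.cos (y + π) := by
        rw [e1, e2]; exact fun h => hne (by linarith)
      show D (t + π) (y + π) = D t y
      rw [hDval _ _ hne', hDval _ _ hne, e1, e2, hodd, hodd,
        show -V (2 * Real.cos t) - -V (2 * Real.cos y)
            = -(V (2 * Real.cos t) - V (2 * Real.cos y)) by ring,
        show -(2 * Real.cos t) - -(2 * Real.cos y)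
            = -(2 * Real.cos t - 2 * Real.cos y) by ring,
        neg_div_neg_eq]
    exact congrFun heq x
  -- periodicity of D in the first variable
  have hperx : ∀ x y : ℝ, D (x + 2 * π) y = D x y := by
    intro x y
    have hc1 : Continuous fun t : ℝ => D (t + 2 * π) y :=
      hD.comp ((continuous_id.add continuous_const).prodMk continuous_const)
    have hc2 : Continuous fun t : ℝ => D t y :=
      hD.comp (continuous_id.prodMk continuous_const)
    have heq : (fun t : ℝ => D (t + 2 * π) y) = fun t : ℝ => D t y := by
      refine Continuous.ext_on (dense_cos_ne y) hc1 hc2 ?_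
      intro t ht
      have ht' : Real.cos t ≠ Real.cos y := ht
      have hne : 2 * Real.cos t ≠ 2 * Real.cos y := fun h => ht' (by linarith)
      have hne' : 2 * Real.cos (t + 2 * π) ≠ 2 * Real.cos y := by
        rw [Real.cos_add_two_pi]; exact hne
      show D (t + 2 * π) y = D t y
      rw [hDval _ _ hne', hDval _ _ hne, Real.cos_add_two_pi]
    exact congrFun heq x
  -- periodicity of D in the second variable
  have hpery : ∀ x y : ℝ, D x (y + 2 * π) = D x y := by
    intro x y
    have hc1 : Continuous fun t : ℝ => D x (t + 2 * π) :=
      hD.comp (continuous_const.prodMk (continuous_id.add continuous_const))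
    have hc2 : Continuous fun t : ℝ => D x t :=
      hD.comp (continuous_const.prodMk continuous_id)
    have heq : (fun t : ℝ => D x (t + 2 * π)) = fun t : ℝ => D x t := by
      refine Continuous.ext_on (dense_cos_ne x) hc1 hc2 ?_
      intro t ht
      have ht' : Real.cos t ≠ Real.cos x := ht
      have hne : 2 * Real.cos x ≠ 2 * Real.cos t := fun h => ht' (by linarith)
      have hne' : 2 * Real.cos x ≠ 2 * Real.cos (t + 2 * π) := by
        rw [Real.cos_add_two_pi]; exact hne
      show D x (t + 2 * π) = D x t
      rw [hDval _ _ hne', hDval _ _ hne, Real.cos_add_two_pi]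
    exact congrFun heq y
  -- abbreviation for the integrand
  set f : ℝ → ℝ → ℝ := fun x y => D x y * Real.cos (((k : ℝ) - l) * (x - y) + m * y) with hf'
  -- f is 2π-periodic in x and in y
  have hfperx : ∀ x y : ℝ, f (x + 2 * π) y = f x y := by
    intro x y
    simp only [hf']
    rw [hperx, show ((k : ℝ) - l) * (x + 2 * π - y) + m * y
        = (((k : ℝ) - l) * (x - y) + m * y) + ((k - l : ℤ) : ℝ) * (2 * π) by push_cast; ring,
      Real.cos_add_int_mul_two_pi]
  have hfpery : ∀ x y : ℝ, f x (y + 2 * π) = f x y := by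
    intro x y
    simp only [hf']
    rw [hpery]
    rcases hm with h | h <;> rw [h]
    · rw [show ((k : ℝ) - l) * (x - (y + 2 * π)) + 1 * (y + 2 * π)
          = (((k : ℝ) - l) * (x - y) + 1 * y) + ((1 - (k - l) : ℤ) : ℝ) * (2 * π) by
            push_cast; ring,
        Real.cos_add_int_mul_two_pi]
    · rw [show ((k : ℝ) - l) * (x - (y + 2 * π)) + 3 * (y + 2 * π)
          = (((k : ℝ) - l) * (x - y) + 3 * y) + ((3 - (k - l) : ℤ) : ℝ) * (2 * π) by
            push_cast; ring,
        Real.cos_add_int_mul_two_pi]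
  -- the key antisymmetry
  have hfneg : ∀ x y : ℝ, f (x + π) (y + π) = -f x y := by
    intro x y
    simp only [hf']
    rw [hshift, show ((k : ℝ) - l) * (x + π - (y + π)) + m * (y + π)
        = (((k : ℝ) - l) * (x - y) + m * y) + m * π by ring, hcosneg]
    ring
  -- inner integral
  set F : ℝ → ℝ := fun x => ∫ y in (-π)..π, f x y with hF'
  have hFshift : ∀ x : ℝ, F (x + π) = -F x := by
    intro x
    have h1 : (∫ y in (-π)..π, f (x + π) (y + π)) = ∫ y in (0:ℝ)..(2*π), f (x + π) y := by
      rw [intervalIntegral.integral_comp_add_right (fun y => f (x + π) y) π]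
      congr 1 <;> ring
    have h2 : (∫ y in (0:ℝ)..(2*π), f (x + π) y) = ∫ y in (-π)..π, f (x + π) y := by
      have hper : Function.Periodic (fun y => f (x + π) y) (2 * π) := fun y => hfpery _ y
      have := hper.intervalIntegral_add_eq 0 (-π)
      rw [zero_add, show -π + 2 * π = π by ring] at this
      exact this
    have h3 : (∫ y in (-π)..π, f (x + π) (y + π)) = ∫ y in (-π)..π, -f x y := by
      congr 1; funext y; exact hfneg x y
    calc F (x + π) = ∫ y in (-π)..π, f (x + π) y := rfl
      _ = ∫ y in (0:ℝ)..(2*π), f (x + π) y := h2.symm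
      _ = ∫ y in (-π)..π, f (x + π) (y + π) := h1.symm
      _ = ∫ y in (-π)..π, -f x y := h3
      _ = -F x := intervalIntegral.integral_neg
  -- outer integral
  have hFper : Function.Periodic F (2 * π) := by
    intro x
    simp only [hF']
    congr 1; funext y; exact hfperx x y
  have hI : (∫ x in (-π)..π, F x) = 0 := by
    have h1 : (∫ x in (-π)..π, F (x + π)) = ∫ x in (0:ℝ)..(2*π), F x := by
      rw [intervalIntegral.integral_comp_add_right F π]; congr 1 <;> ring
    have h2 : (∫ x in (0:ℝ)..(2*π), F x) = ∫ x in (-π)..π, F x := by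
      have := hFper.intervalIntegral_add_eq 0 (-π)
      rw [zero_add, show -π + 2 * π = π by ring] at this
      exact this
    have h3 : (∫ x in (-π)..π, F (x + π)) = -∫ x in (-π)..π, F x := by
      rw [show (fun x => F (x + π)) = fun x => -F x from funext hFshift]
      exact intervalIntegral.integral_neg
    have : -∫ x in (-π)..π, F x = ∫ x in (-π)..π, F x := by rw [← h3, h1, h2]
    linarith
  show (1 / (4 * Real.pi ^ 2)) * (∫ x in (-π)..π, F x) = 0
  rw [hI, mul_zero]
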